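/- Let φ and ψ be holomorphic functions on an annulus A = {z : r < |z| < R} such that the product conj(ψ')·φ' of their derivatives is a radial function on A. Then either there exist an integer m and constants a, b ∈ ℂ with φ(z) = a·zᵐ + c₁ and ψ(z) = b·zᵐ + c₂ (for constants c₁, c₂), or at least one of φ, ψ is constant. -/

import Mathlib

open Complex Filter Set

/-! ### Auxiliary lemmas -/

lemma ann_isOpen (a b : ℝ) : IsOpen {z : ℂ | a < ‖z‖ ∧ ‖z‖ < b} := by
  have h1 : IsOpen {z : ℂ | a < ‖z‖} := isOpen_lt continuous_const continuous_norm
  have h2 : IsOpen {z : ℂ | ‖z‖ < b} := isOpen_lt continuous_norm continuous_const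
  rw [Set.setOf_and]; exact h1.inter h2

lemma ann_isPreconnected {a b : ℝ} (ha : 0 ≤ a) :
    IsPreconnected {z : ℂ | a < ‖z‖ ∧ ‖z‖ < b} := by
  have himg : {z : ℂ | a < ‖z‖ ∧ ‖z‖ < b} =
      (fun p : ℝ × ℝ => (p.1 : ℂ) * Complex.exp (p.2 * I)) '' (Set.Ioo a b ×ˢ Set.univ) := by
    ext z; constructor
    · rintro ⟨h1, h2⟩
      exact ⟨(‖z‖, z.arg), ⟨⟨h1, h2⟩, trivial⟩, Complex.norm_mul_exp_arg_mul_I z⟩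
    · rintro ⟨⟨ρ, θ⟩, ⟨⟨h1, h2⟩, -⟩, rfl⟩
      simp only [Set.mem_setOf_eq, norm_mul, Complex.norm_real, Real.norm_eq_abs, Complex.norm_exp_ofReal_mul_I,
        mul_one]
      rw [abs_of_pos (lt_of_le_of_lt ha h1)]
      exact ⟨h1, h2⟩
  rw [himg]
  exact (isPreconnected_Ioo.prod isPreconnected_univ).image _
    ((Complex.continuous_ofReal.comp continuous_fst).mul
      (Complex.continuous_exp.comp
        ((Complex.continuous_ofReal.comp continuous_snd).mul continuous_const))).continuousOn

lemma const_of_deriv_zero {U : Set ℂ} (hU : IsOpen U) (hUc : IsPreconnected U) {f : ℂ → ℂ}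
    (hf : DifferentiableOn ℂ f U) (hd : ∀ z ∈ U, deriv f z = 0) {z₀ : ℂ} (hz₀ : z₀ ∈ U) :
    ∀ z ∈ U, f z = f z₀ := by
  have hfa : AnalyticOnNhd ℂ f U := hf.analyticOnNhd hU
  have key : Set.EqOn f (fun _ => f z₀) U := by
    apply hfa.eqOn_of_preconnected_of_frequently_eq analyticOnNhd_const hUc hz₀
    obtain ⟨ε, hε, hball⟩ := Metric.isOpen_iff.mp hU z₀ hz₀
    have hconst : ∀ y ∈ Metric.ball z₀ ε, f y = f z₀ := by
      intro y hy
      refine (convex_ball z₀ ε).is_const_of_fderivWithin_eq_zero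
        (hf.mono hball) (fun x hx => ?_) hy (Metric.mem_ball_self hε)
      rw [fderivWithin_of_isOpen Metric.isOpen_ball hx]
      have hdiff : DifferentiableAt ℂ f x := (hfa x (hball hx)).differentiableAt
      have h0 : HasDerivAt f 0 x := by
        have := hdiff.hasDerivAt
        rwa [hd x (hball hx)] at this
      have := h0.hasFDerivAt.fderiv
      rw [this]; ext1; simp
    have hev : ∀ᶠ y in nhds z₀, f y = f z₀ := by
      filter_upwards [Metric.ball_mem_nhds z₀ hε] using hconst
    exact (hev.filter_mono nhdsWithin_le_nhds).frequently
  exact fun z hz => key hz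

lemma hasDerivAt_conj_conj {f : ℂ → ℂ} {d z : ℂ}
    (hf : HasDerivAt f d ((starRingEnd ℂ) z)) :
    HasDerivAt (fun w => (starRingEnd ℂ) (f ((starRingEnd ℂ) w))) ((starRingEnd ℂ) d) z := by
  rw [hasDerivAt_iff_isLittleO] at hf ⊢
  have hconj : Filter.Tendsto (fun w : ℂ => (starRingEnd ℂ) w) (nhds z)
      (nhds ((starRingEnd ℂ) z)) := (Complex.continuous_conj.tendsto z)
  have h1 := hf.comp_tendsto hconj
  rw [← Asymptotics.isLittleO_norm_norm] at h1 ⊢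
  refine (h1.congr (fun w => ?_) (fun w => ?_))
  · simp only [Function.comp_apply, smul_eq_mul]
    rw [show (starRingEnd ℂ) (f ((starRingEnd ℂ) w)) - (starRingEnd ℂ) (f ((starRingEnd ℂ) z))
        - (w - z) * (starRingEnd ℂ) d
        = (starRingEnd ℂ) (f ((starRingEnd ℂ) w) - f ((starRingEnd ℂ) z)
            - ((starRingEnd ℂ) w - (starRingEnd ℂ) z) * d) by
      simp only [map_sub, map_mul, Complex.conj_conj], Complex.norm_conj]
  · simp only [Function.comp_apply]
    rw [show (starRingEnd ℂ) w - (starRingEnd ℂ) z = (starRingEnd ℂ) (w - z) from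
      (map_sub _ _ _).symm, Complex.norm_conj]

noncomputable def circfn (c : ℂ) (t : ℝ) : ℂ := c * Complex.exp ((t : ℂ) * I)

lemma hasDerivAt_circ (c : ℂ) (t : ℝ) :
    HasDerivAt (fun t : ℝ => c * Complex.exp ((t : ℂ) * I)) (c * Complex.exp ((t : ℂ) * I) * I) t := by
  have h0 : HasDerivAt (fun w : ℂ => w * I) I (t : ℂ) := by
    simpa using (hasDerivAt_id (t : ℂ)).mul_const I
  have h1 : HasDerivAt (fun w : ℂ => Complex.exp (w * I))
      (Complex.exp ((t : ℂ) * I) * I) (t : ℂ) := by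
    exact (Complex.hasDerivAt_exp ((t : ℂ) * I)).comp (t : ℂ) h0
  have h2 := (h1.const_mul c).comp_ofReal
  simpa [mul_assoc] using h2

lemma hasDerivAt_expLin (k : ℂ) (t : ℝ) :
    HasDerivAt (fun t : ℝ => Complex.exp (k * (t : ℂ))) (k * Complex.exp (k * (t : ℂ))) t := by
  have h0 : HasDerivAt (fun w : ℂ => k * w) k (t : ℂ) := by
    simpa using (hasDerivAt_id (t : ℂ)).const_mul k
  have h1 := (Complex.hasDerivAt_exp (k * (t : ℂ))).comp (t : ℂ) h0
  simpa [mul_comm] using h1.comp_ofReal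

lemma circfn_ne {c : ℂ} (hc : c ≠ 0) (t : ℝ) : circfn c t ≠ 0 :=
  mul_ne_zero hc (Complex.exp_ne_zero _)

lemma circfn_two_pi (c : ℂ) : circfn c (2 * Real.pi) = c := by
  unfold circfn; push_cast; rw [Complex.exp_two_pi_mul_I, mul_one]

lemma circfn_zero (c : ℂ) : circfn c 0 = c := by unfold circfn; simp

lemma loopA {f : ℂ → ℂ} {μ c : ℂ} (hc : c ≠ 0)
    (hf : ∀ t : ℝ, HasDerivAt f (μ * f (circfn c t) / circfn c t) (circfn c t))
    (hfc : f c ≠ 0) : ∃ m : ℤ, μ = (m : ℂ) := by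
  set u : ℝ → ℂ := fun t => f (circfn c t) with hu_def
  have hu : ∀ t : ℝ, HasDerivAt u (I * μ * u t) t := by
    intro t
    have hne := circfn_ne hc t
    have h1 : HasDerivAt u
        ((c * Complex.exp ((t : ℂ) * I) * I) • (μ * f (circfn c t) / circfn c t)) t :=
      (hf t).scomp t (hasDerivAt_circ c t)
    refine h1.congr_deriv ?_
    have hZ : circfn c t = c * Complex.exp ((t : ℂ) * I) := rfl
    rw [smul_eq_mul, ← hZ]
    field_simp
    ring
  have hv : ∀ t : ℝ, HasDerivAt (fun t : ℝ => u t * Complex.exp (-(I * μ) * (t : ℂ))) 0 t := by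
    intro t
    refine ((hu t).mul (hasDerivAt_expLin (-(I * μ)) t)).congr_deriv ?_
    ring
  have hconst : u (2 * Real.pi) * Complex.exp (-(I * μ) * ((2 * Real.pi : ℝ) : ℂ))
      = u 0 * Complex.exp (-(I * μ) * ((0 : ℝ) : ℂ)) :=
    is_const_of_deriv_eq_zero (fun t => (hv t).differentiableAt)
      (fun t => (hv t).deriv) _ _
  have h1 : u (2 * Real.pi) = f c := by rw [hu_def]; simp [circfn_two_pi]
  have h2 : u 0 = f c := by rw [hu_def]; simp [circfn_zero]
  rw [h1, h2] at hconst
  simp only [Complex.ofReal_zero, mul_zero, Complex.exp_zero, mul_one] at hconst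
  have hexp1 : Complex.exp (-(I * μ) * ((2 * Real.pi : ℝ) : ℂ)) = 1 :=
    mul_left_cancel₀ hfc (by rw [hconst, mul_one])
  obtain ⟨n, hn⟩ := Complex.exp_eq_one_iff.mp hexp1
  refine ⟨-n, ?_⟩
  have hne : (2 * (Real.pi : ℂ) * I) ≠ 0 := by
    simp [Real.pi_ne_zero, Complex.I_ne_zero, Complex.ofReal_ne_zero]
  have key : μ * (2 * (Real.pi : ℂ) * I) = (-(n : ℂ)) * (2 * (Real.pi : ℂ) * I) := by
    push_cast at hn ⊢
    linear_combination -hn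
  have := mul_right_cancel₀ hne key
  rw [this]; push_cast; ring

lemma loopB {φ : ℂ → ℂ} {a c : ℂ} (hc : c ≠ 0)
    (hf : ∀ t : ℝ, HasDerivAt φ (a / circfn c t) (circfn c t)) : a = 0 := by
  set u : ℝ → ℂ := fun t => φ (circfn c t) with hu_def
  have hu : ∀ t : ℝ, HasDerivAt u (I * a) t := by
    intro t
    have hne := circfn_ne hc t
    have h1 : HasDerivAt u ((c * Complex.exp ((t : ℂ) * I) * I) • (a / circfn c t)) t :=
      (hf t).scomp t (hasDerivAt_circ c t)
    refine h1.congr_deriv ?_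
    have hZ : circfn c t = c * Complex.exp ((t : ℂ) * I) := rfl
    rw [smul_eq_mul, ← hZ]
    field_simp
  have hlin : ∀ t : ℝ, HasDerivAt (fun t : ℝ => (I * a) * (t : ℂ)) (I * a) t := by
    intro t
    simpa using ((hasDerivAt_id ((t : ℂ))).const_mul (I * a)).comp_ofReal
  have hv : ∀ t : ℝ, HasDerivAt (fun t : ℝ => u t - (I * a) * (t : ℂ)) 0 t := by
    intro t
    exact ((hu t).sub (hlin t)).congr_deriv (sub_self _)
  have hconst : u (2 * Real.pi) - (I * a) * ((2 * Real.pi : ℝ) : ℂ)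
      = u 0 - (I * a) * ((0 : ℝ) : ℂ) :=
    is_const_of_deriv_eq_zero (fun t => (hv t).differentiableAt)
      (fun t => (hv t).deriv) _ _
  have h1 : u (2 * Real.pi) = φ c := by rw [hu_def]; simp [circfn_two_pi]
  have h2 : u 0 = φ c := by rw [hu_def]; simp [circfn_zero]
  rw [h1, h2] at hconst
  simp only [Complex.ofReal_zero, mul_zero, sub_zero] at hconst
  have h3 : (I * a) * ((2 * Real.pi : ℝ) : ℂ) = 0 := sub_eq_self.mp hconst
  have hπ : ((2 * Real.pi : ℝ) : ℂ) ≠ 0 := by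
    rw [Complex.ofReal_ne_zero]; positivity
  have hIa := (mul_eq_zero.mp h3).resolve_right hπ
  exact (mul_eq_zero.mp hIa).resolve_left Complex.I_ne_zero

lemma exp_ne_one_small {x : ℝ} (h0 : 0 < x) (h2 : x < 2 * Real.pi) :
    Complex.exp ((x : ℂ) * I) ≠ 1 := by
  intro h
  obtain ⟨n, hn⟩ := Complex.exp_eq_one_iff.mp h
  have hx : (x : ℂ) * I = ((n : ℝ) * (2 * Real.pi) : ℝ) * I := by
    rw [hn]; push_cast; ring
  have hxr : x = (n : ℝ) * (2 * Real.pi) := by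
    have := mul_right_cancel₀ Complex.I_ne_zero hx
    exact_mod_cast this
  rcases lt_trichotomy n 0 with hn0 | hn0 | hn0
  · have h5 : (n : ℝ) ≤ -1 := by
      have : n ≤ -1 := by omega
      exact_mod_cast this
    nlinarith [Real.pi_pos]
  · subst hn0; simp at hxr; linarith
  · have h5 : (1 : ℝ) ≤ (n : ℝ) := by
      have : 1 ≤ n := by omega
      exact_mod_cast this
    nlinarith [Real.pi_pos]

theorem hankel_stmt3 (r R : ℝ) (hr : 0 < r) (hrR : r < R)
    (A : Set ℂ) (hA : A = {z : ℂ | r < ‖z‖ ∧ ‖z‖ < R})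
    (φ ψ : ℂ → ℂ) (hφ : DifferentiableOn ℂ φ A) (hψ : DifferentiableOn ℂ ψ A)
    (hradial : ∀ z w, z ∈ A → w ∈ A → ‖z‖ = ‖w‖ →
      (starRingEnd ℂ) (deriv ψ z) * deriv φ z =
        (starRingEnd ℂ) (deriv ψ w) * deriv φ w) :
    (∃ (m : ℤ) (a b c₁ c₂ : ℂ), ∀ z ∈ A, φ z = a * z ^ m + c₁ ∧ ψ z = b * z ^ m + c₂) ∨
      (∃ c : ℂ, ∀ z ∈ A, φ z = c) ∨ (∃ c : ℂ, ∀ z ∈ A, ψ z = c) := by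
  have hAopen : IsOpen A := hA ▸ ann_isOpen r R
  have hAconn : IsPreconnected A := hA ▸ ann_isPreconnected hr.le
  have hmemA : ∀ z : ℂ, z ∈ A ↔ (r < ‖z‖ ∧ ‖z‖ < R) := by
    intro z; rw [hA]; exact Iff.rfl
  have hA0 : ∀ z ∈ A, z ≠ 0 := by
    rintro z hz rfl
    rw [hmemA] at hz
    simp only [norm_zero] at hz
    linarith [hz.1]
  have hconjA : ∀ z, z ∈ A → (starRingEnd ℂ) z ∈ A := by
    intro z hz
    rw [hmemA] at hz ⊢
    simpa [Complex.norm_conj] using hz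
  have hmid : (((r + R) / 2 : ℝ) : ℂ) ∈ A := by
    rw [hmemA]
    rw [Complex.norm_real, Real.norm_eq_abs, abs_of_pos (by linarith)]
    constructor <;> linarith
  set f : ℂ → ℂ := deriv φ with hf_def
  set g : ℂ → ℂ := deriv ψ with hg_def
  have hφa : AnalyticOnNhd ℂ φ A := hφ.analyticOnNhd hAopen
  have hψa : AnalyticOnNhd ℂ ψ A := hψ.analyticOnNhd hAopen
  have hfa : AnalyticOnNhd ℂ f A := hφa.deriv_of_isOpen hAopen
  have hga : AnalyticOnNhd ℂ g A := hψa.deriv_of_isOpen hAopen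
  have hfd : ∀ z ∈ A, HasDerivAt f (deriv f z) z :=
    fun z hz => ((hfa z hz).differentiableAt).hasDerivAt
  have hgd : ∀ z ∈ A, HasDerivAt g (deriv g z) z :=
    fun z hz => ((hga z hz).differentiableAt).hasDerivAt
  have hφd : ∀ z ∈ A, HasDerivAt φ (f z) z :=
    fun z hz => ((hφa z hz).differentiableAt).hasDerivAt
  have hψd : ∀ z ∈ A, HasDerivAt ψ (g z) z :=
    fun z hz => ((hψa z hz).differentiableAt).hasDerivAt
  by_cases hf0 : ∀ z ∈ A, f z = 0
  · exact Or.inr (Or.inl ⟨φ _, fun z hz =>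
      const_of_deriv_zero hAopen hAconn hφ hf0 hmid z hz⟩)
  by_cases hg0 : ∀ z ∈ A, g z = 0
  · exact Or.inr (Or.inr ⟨ψ _, fun z hz =>
      const_of_deriv_zero hAopen hAconn hψ hg0 hmid z hz⟩)
  push_neg at hf0 hg0
  obtain ⟨z₀, hz₀A, hfz₀⟩ := hf0
  obtain ⟨w₁, hw₁A, hgw₁⟩ := hg0
  have hz₀0 : z₀ ≠ 0 := hA0 _ hz₀A
  -- the reflected function
  set G : ℂ → ℂ := fun w => (starRingEnd ℂ) (g ((starRingEnd ℂ) w)) with hG_def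
  have hGd : ∀ w ∈ A, HasDerivAt G ((starRingEnd ℂ) (deriv g ((starRingEnd ℂ) w))) w :=
    fun w hw => hasDerivAt_conj_conj (hgd _ (hconjA w hw))
  have hGderiv : ∀ w ∈ A, deriv G w = (starRingEnd ℂ) (deriv g ((starRingEnd ℂ) w)) :=
    fun w hw => (hGd w hw).deriv
  have hGdiff : DifferentiableOn ℂ G A :=
    fun w hw => ((hGd w hw).differentiableAt).differentiableWithinAt
  have hGa : AnalyticOnNhd ℂ G A := hGdiff.analyticOnNhd hAopen
  have hGconj : ∀ z ∈ A, G ((starRingEnd ℂ) z) = (starRingEnd ℂ) (g z) := by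
    intro z hz
    rw [hG_def]
    simp
  -- Step 1: the differentiated relation along inversion circles
  have hstar : ∀ s ∈ Set.Ioo r R, ∀ z ∈ A, ((s : ℂ) ^ 2 / z) ∈ A →
      z * deriv f z * G ((s : ℂ) ^ 2 / z) =
        f z * (((s : ℂ) ^ 2 / z) * deriv G ((s : ℂ) ^ 2 / z)) := by
    intro s hs z hzA hwA
    obtain ⟨hrs, hsR⟩ := hs
    have hR0 : (0 : ℝ) < R := hr.trans hrR
    have hs0 : (0 : ℝ) < s := hr.trans hrs
    have hsC0 : (s : ℂ) ≠ 0 := by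
      simpa [Complex.ofReal_ne_zero] using hs0.ne'
    set U : Set ℂ := {x : ℂ | max r (s ^ 2 / R) < ‖x‖ ∧
      ‖x‖ < min R (s ^ 2 / r)} with hU_def
    have hUopen : IsOpen U := ann_isOpen _ _
    have hUconn : IsPreconnected U := ann_isPreconnected (le_trans hr.le (le_max_left _ _))
    have hUsubA : U ⊆ A := by
      intro x hx
      rw [hmemA]
      exact ⟨lt_of_le_of_lt (le_max_left _ _) hx.1, lt_of_lt_of_le hx.2 (min_le_left _ _)⟩
    have habsdiv : ∀ x : ℂ, ‖(s : ℂ) ^ 2 / x‖ = s ^ 2 / ‖x‖ := by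
      intro x
      rw [norm_div, norm_pow, Complex.norm_real, Real.norm_eq_abs, abs_of_pos hs0]
    have hUmap : ∀ x ∈ U, (s : ℂ) ^ 2 / x ∈ A := by
      intro x hx
      have hx0 : x ≠ 0 := hA0 x (hUsubA hx)
      have habs : 0 < ‖x‖ := norm_pos_iff.mpr hx0
      rw [hmemA, habsdiv x]
      constructor
      · rw [lt_div_iff₀ habs]
        have h1 : ‖x‖ < s ^ 2 / r := lt_of_lt_of_le hx.2 (min_le_right _ _)
        rw [lt_div_iff₀ hr] at h1
        nlinarith
      · rw [div_lt_iff₀ habs]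
        have h1 : s ^ 2 / R < ‖x‖ := lt_of_le_of_lt (le_max_right _ _) hx.1
        rw [div_lt_iff₀ hR0] at h1
        nlinarith
    have hz0 : z ≠ 0 := hA0 z hzA
    have habsz : 0 < ‖z‖ := norm_pos_iff.mpr hz0
    have hzA' := (hmemA z).mp hzA
    have hwA' := (hmemA _).mp hwA
    rw [habsdiv z] at hwA'
    have hzU : z ∈ U := by
      constructor
      · rw [max_lt_iff]
        refine ⟨hzA'.1, ?_⟩
        rw [div_lt_iff₀ hR0]
        have h1 := hwA'.2
        rw [div_lt_iff₀ habsz] at h1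
        nlinarith
      · rw [lt_min_iff]
        refine ⟨hzA'.2, ?_⟩
        rw [lt_div_iff₀ hr]
        have h1 := hwA'.1
        rw [lt_div_iff₀ habsz] at h1
        nlinarith
    have habs_sC : ‖(s : ℂ)‖ = s := by
      rw [Complex.norm_real, Real.norm_eq_abs, abs_of_pos hs0]
    have hsCU : (s : ℂ) ∈ U := by
      constructor
      · rw [habs_sC, max_lt_iff]
        refine ⟨hrs, ?_⟩
        rw [div_lt_iff₀ hR0]
        nlinarith
      · rw [habs_sC, lt_min_iff]
        refine ⟨hsR, ?_⟩
        rw [lt_div_iff₀ hr]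
        nlinarith
    have hsA : (s : ℂ) ∈ A := hUsubA hsCU
    set Ψ : ℂ → ℂ := fun x => G ((s : ℂ) ^ 2 / x) * f x with hΨ_def
    have hΨd : ∀ x ∈ U, HasDerivAt Ψ
        (deriv G ((s : ℂ) ^ 2 / x) * ((s : ℂ) ^ 2 * (-(x ^ 2)⁻¹)) * f x
          + G ((s : ℂ) ^ 2 / x) * deriv f x) x := by
      intro x hx
      have hx0 : x ≠ 0 := hA0 x (hUsubA hx)
      have hwxA : (s : ℂ) ^ 2 / x ∈ A := hUmap x hx
      have hinner : HasDerivAt (fun y : ℂ => (s : ℂ) ^ 2 / y) ((s : ℂ) ^ 2 * (-(x ^ 2)⁻¹)) x := by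
        simpa [div_eq_mul_inv] using (hasDerivAt_inv hx0).const_mul ((s : ℂ) ^ 2)
      have hGx : HasDerivAt G (deriv G ((s : ℂ) ^ 2 / x)) ((s : ℂ) ^ 2 / x) :=
        ((hGa _ hwxA).differentiableAt).hasDerivAt
      exact (hGx.comp x hinner).mul (hfd x (hUsubA hx))
    have hΨdiff : DifferentiableOn ℂ Ψ U :=
      fun x hx => ((hΨd x hx).differentiableAt).differentiableWithinAt
    have hΨa : AnalyticOnNhd ℂ Ψ U := hΨdiff.analyticOnNhd hUopen
    have hΨs : Ψ (s : ℂ) = (starRingEnd ℂ) (g (s : ℂ)) * f (s : ℂ) := by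
      have hss : ((s : ℂ) ^ 2) / (s : ℂ) = (s : ℂ) := by
        rw [pow_two, mul_div_assoc, div_self hsC0, mul_one]
      show G ((s : ℂ) ^ 2 / (s : ℂ)) * f (s : ℂ) = _
      rw [hss, hG_def]
      simp [Complex.conj_ofReal]
    have hcirc : ∀ x : ℂ, ‖x‖ = s → Ψ x = Ψ (s : ℂ) := by
      intro x habs
      have hx0 : x ≠ 0 := by
        intro h; rw [h] at habs; simp at habs; linarith
      have hxA : x ∈ A := by rw [hmemA, habs]; exact ⟨hrs, hsR⟩
      have hkey : (s : ℂ) ^ 2 / x = (starRingEnd ℂ) x := by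
        have h1 : x * (starRingEnd ℂ) x = ((s : ℂ)) ^ 2 := by
          rw [Complex.mul_conj]
          rw [Complex.normSq_eq_norm_sq, habs]
          push_cast; ring
        rw [eq_comm, eq_div_iff hx0]
        linear_combination h1
      show G ((s : ℂ) ^ 2 / x) * f x = Ψ (s : ℂ)
      rw [hkey, hGconj x hxA, hΨs]
      exact hradial x (s : ℂ) hxA hsA (by rw [habs, habs_sC])
    have hΨconst : Set.EqOn Ψ (fun _ => Ψ (s : ℂ)) U := by
      apply hΨa.eqOn_of_preconnected_of_frequently_eq analyticOnNhd_const hUconn hsCU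
      have habscirc : ∀ n : ℕ, ‖circfn (s : ℂ) (1 / (n + 1))‖ = s := by
        intro n
        unfold circfn
        rw [norm_mul, habs_sC, Complex.norm_exp_ofReal_mul_I, mul_one]
      have hne : ∀ n : ℕ, circfn (s : ℂ) (1 / (n + 1)) ≠ (s : ℂ) := by
        intro n h
        have hn1 : (0 : ℝ) < 1 / ((n : ℝ) + 1) := by positivity
        have hn2 : 1 / ((n : ℝ) + 1) ≤ 1 := by
          rw [div_le_one (by positivity)]
          simp [Nat.cast_nonneg]
        have h1 : Complex.exp (((1 / ((n : ℝ) + 1) : ℝ) : ℂ) * I) = 1 := by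
          apply mul_left_cancel₀ hsC0
          rw [mul_one]
          exact h
        exact exp_ne_one_small hn1 (by nlinarith [Real.pi_gt_three]) h1
      have htend : Tendsto (fun n : ℕ => circfn (s : ℂ) (1 / (n + 1))) atTop
          (nhdsWithin (s : ℂ) {(s : ℂ)}ᶜ) := by
        apply tendsto_nhdsWithin_of_tendsto_nhds_of_eventually_within
        · have hcont : Continuous (fun t : ℝ => (s : ℂ) * Complex.exp ((t : ℂ) * I)) :=
            continuous_const.mul (Complex.continuous_exp.comp
              (Complex.continuous_ofReal.mul continuous_const))
          have h0 := (hcont.tendsto 0).comp tendsto_one_div_add_atTop_nhds_zero_nat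
          have h0' : Tendsto (fun n : ℕ => circfn (s : ℂ) (1 / (n + 1))) atTop
              (nhds ((s : ℂ) * Complex.exp (((0 : ℝ) : ℂ) * I))) := h0
          simpa using h0'
        · exact Eventually.of_forall fun n => hne n
      exact htend.frequently (Eventually.of_forall
        (fun n => hcirc _ (habscirc n))).frequently
    have hev : Ψ =ᶠ[nhds z] fun _ => Ψ (s : ℂ) := by
      filter_upwards [hUopen.mem_nhds hzU] with x hx using hΨconst hx
    have h0 : HasDerivAt Ψ 0 z := (hasDerivAt_const z (Ψ (s : ℂ))).congr_of_eventuallyEq hev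
    have huniq := (hΨd z hzU).unique h0
    field_simp at huniq ⊢
    linear_combination huniq

  -- Step 2: the bilinear identity on all of A × A
  have hbil : ∀ z ∈ A, ∀ w ∈ A, z * deriv f z * G w = f z * (w * deriv G w) := by
    intro z hz
    have hz0 : z ≠ 0 := hA0 z hz
    have habsz : 0 < ‖z‖ := norm_pos_iff.mpr hz0
    have hzA' := (hmemA z).mp hz
    have hPa : AnalyticOnNhd ℂ (fun w => z * deriv f z * G w) A := analyticOnNhd_const.mul hGa
    have hQa : AnalyticOnNhd ℂ (fun w => f z * (w * deriv G w)) A :=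
      analyticOnNhd_const.mul (analyticOnNhd_id.mul (hGa.deriv_of_isOpen hAopen))
    have hcw : (starRingEnd ℂ) z ∈ A := hconjA z hz
    have hconjval : ((‖z‖ : ℝ) : ℂ) ^ 2 / z = (starRingEnd ℂ) z := by
      rw [eq_comm, eq_div_iff hz0, mul_comm, Complex.mul_conj, Complex.normSq_eq_norm_sq]
      push_cast; ring
    have hF : Continuous (fun s : ℝ => ((s : ℂ)) ^ 2 / z) :=
      (Complex.continuous_ofReal.pow 2).div_const z
    have htendF : Tendsto (fun s : ℝ => ((s : ℂ)) ^ 2 / z)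
        (nhdsWithin (‖z‖) (Set.Ioi (‖z‖)))
        (nhdsWithin ((starRingEnd ℂ) z) {(starRingEnd ℂ) z}ᶜ) := by
      apply tendsto_nhdsWithin_of_tendsto_nhds_of_eventually_within
      · have h1 := hF.tendsto (‖z‖)
        rw [hconjval] at h1
        exact h1.mono_left nhdsWithin_le_nhds
      · filter_upwards [self_mem_nhdsWithin] with s hs
        have hs' : ‖z‖ < s := Set.mem_Ioi.mp hs
        intro hEq
        rw [Set.mem_singleton_iff] at hEq
        have hspos : (0 : ℝ) < s := habsz.trans hs'
        have h1 : ‖((s : ℂ)) ^ 2 / z‖ = s ^ 2 / ‖z‖ := by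
          rw [norm_div, norm_pow, Complex.norm_real, Real.norm_eq_abs, abs_of_pos hspos]
        rw [hEq, Complex.norm_conj, eq_div_iff habsz.ne'] at h1
        nlinarith
    have hev : ∀ᶠ (s : ℝ) in nhdsWithin (‖z‖) (Set.Ioi (‖z‖)),
        (fun w => z * deriv f z * G w) (((s : ℂ)) ^ 2 / z)
          = (fun w => f z * (w * deriv G w)) (((s : ℂ)) ^ 2 / z) := by
      have e1 : Set.Ioo r R ∈ nhdsWithin (‖z‖) (Set.Ioi (‖z‖)) :=
        nhdsWithin_le_nhds (isOpen_Ioo.mem_nhds ⟨hzA'.1, hzA'.2⟩)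
      have hcont2 : Tendsto (fun s : ℝ => s ^ 2 / ‖z‖)
          (nhdsWithin (‖z‖) (Set.Ioi (‖z‖))) (nhds (‖z‖)) := by
        have hc : Continuous (fun s : ℝ => s ^ 2 / ‖z‖) :=
          (continuous_pow 2).div_const _
        have h3 := hc.tendsto (‖z‖)
        rw [show (‖z‖) ^ 2 / ‖z‖ = ‖z‖ by
          field_simp [habsz.ne']] at h3
        exact h3.mono_left nhdsWithin_le_nhds
      have e2 := hcont2 (isOpen_Ioo.mem_nhds (⟨hzA'.1, hzA'.2⟩ : ‖z‖ ∈ Set.Ioo r R))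
      filter_upwards [e1, e2, self_mem_nhdsWithin] with s hsIoo hsdiv hsIoi
      have hFA : ((s : ℂ)) ^ 2 / z ∈ A := by
        rw [hmemA]
        have habsF : ‖((s : ℂ)) ^ 2 / z‖ = s ^ 2 / ‖z‖ := by
          rw [norm_div, norm_pow, Complex.norm_real, Real.norm_eq_abs, abs_of_pos (habsz.trans (Set.mem_Ioi.mp hsIoi))]
        rw [habsF]
        exact hsdiv
      exact hstar s hsIoo z hz hFA
    have hfreq := htendF.frequently
      (p := fun w => z * deriv f z * G w = f z * (w * deriv G w)) hev.frequently
    have hEqOn := hPa.eqOn_of_preconnected_of_frequently_eq hQa hAconn hcw hfreq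
    exact fun w hw => hEqOn hw

  -- Step 3: the common logarithmic derivative μ
  have hw₀A : (starRingEnd ℂ) w₁ ∈ A := hconjA _ hw₁A
  have hGw₀ : G ((starRingEnd ℂ) w₁) ≠ 0 := by
    rw [hG_def]
    simpa using hgw₁
  set w₀ : ℂ := (starRingEnd ℂ) w₁ with hw₀_def
  set μ : ℂ := w₀ * deriv G w₀ / G w₀ with hμ_def
  have hzf : ∀ z ∈ A, z * deriv f z = μ * f z := by
    intro z hz
    have h1 := hbil z hz w₀ hw₀A
    rw [hμ_def]
    field_simp
    linear_combination h1
  have hwG : ∀ w ∈ A, w * deriv G w = μ * G w := by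
    intro w hw
    have h1 := hbil z₀ hz₀A w hw
    rw [hzf z₀ hz₀A] at h1
    have h2 : f z₀ * (μ * G w) = f z₀ * (w * deriv G w) := by linear_combination h1
    exact (mul_left_cancel₀ hfz₀ h2).symm
  -- Step 4: μ is an integer
  obtain ⟨m, hμm⟩ : ∃ m : ℤ, μ = (m : ℂ) := by
    apply loopA hz₀0 _ hfz₀
    intro t
    have hζA : circfn z₀ t ∈ A := by
      rw [hmemA] at hz₀A ⊢
      unfold circfn
      simpa [norm_mul, Complex.norm_exp_ofReal_mul_I] using hz₀A
    have hζ0 : circfn z₀ t ≠ 0 := circfn_ne hz₀0 t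
    have h1 := hfd _ hζA
    have h2 : deriv f (circfn z₀ t) = μ * f (circfn z₀ t) / circfn z₀ t := by
      have := hzf _ hζA
      field_simp
      linear_combination this
    rwa [h2] at h1
  -- Step 5: f and G are multiples of z ^ m
  have key : ∀ (F : ℂ → ℂ), AnalyticOnNhd ℂ F A → (∀ z ∈ A, HasDerivAt F (deriv F z) z) →
      (∀ z ∈ A, z * deriv F z = μ * F z) → ∀ z ∈ A, F z = (F z₀ * z₀ ^ (-m)) * z ^ m := by
    intro F hFa hFd hFμ
    have hhd : ∀ z ∈ A, HasDerivAt (fun z => F z * z ^ (-m)) 0 z := by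
      intro z hz
      have hz0 : z ≠ 0 := hA0 z hz
      refine ((hFd z hz).mul (hasDerivAt_zpow (-m) z (Or.inl hz0))).congr_deriv ?_
      have h1 : z * deriv F z = (m : ℂ) * F z := by rw [← hμm]; exact hFμ z hz
      have h2 : z ^ (-m - 1) * z = z ^ (-m) := by
        rw [← zpow_add_one₀ hz0]; ring_nf
      have h3 : deriv F z * z ^ (-m) = (m : ℂ) * F z * z ^ (-m - 1) := by
        calc deriv F z * z ^ (-m) = (z * deriv F z) * z ^ (-m - 1) := by
              rw [← h2]; ring
          _ = (m : ℂ) * F z * z ^ (-m - 1) := by rw [h1]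
      rw [h3]
      push_cast
      ring
    have hcst := const_of_deriv_zero hAopen hAconn
      (fun z hz => ((hhd z hz).differentiableAt).differentiableWithinAt)
      (fun z hz => (hhd z hz).deriv) hz₀A
    intro z hz
    have hz0 : z ≠ 0 := hA0 z hz
    have := hcst z hz
    have hz₂ : F z = F z * z ^ (-m) * z ^ m := by
      rw [zpow_neg, mul_assoc, inv_mul_cancel₀ (zpow_ne_zero _ hz0), mul_one]
    rw [hz₂, this]
  have hfz : ∀ z ∈ A, f z = (f z₀ * z₀ ^ (-m)) * z ^ m :=
    key f hfa hfd hzf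
  have hGz : ∀ w ∈ A, G w = (G z₀ * z₀ ^ (-m)) * w ^ m :=
    key G hGa (fun w hw => ((hGa w hw).differentiableAt).hasDerivAt) hwG
  set a : ℂ := f z₀ * z₀ ^ (-m) with ha_def
  set b : ℂ := (starRingEnd ℂ) (G z₀ * z₀ ^ (-m)) with hb_def
  have hgz : ∀ z ∈ A, g z = b * z ^ m := by
    intro z hz
    have h1 : G ((starRingEnd ℂ) z) = (starRingEnd ℂ) (g z) := hGconj z hz
    have h2 : G ((starRingEnd ℂ) z) = (G z₀ * z₀ ^ (-m)) * ((starRingEnd ℂ) z) ^ m :=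
      hGz _ (hconjA z hz)
    have h3 : (starRingEnd ℂ) (g z) = (G z₀ * z₀ ^ (-m)) * ((starRingEnd ℂ) z) ^ m := by
      rw [← h1, h2]
    have h4 := congrArg (starRingEnd ℂ) h3
    rw [Complex.conj_conj] at h4
    rw [h4, hb_def]
    rw [map_mul, map_zpow₀, Complex.conj_conj]
  have ha0 : a ≠ 0 := mul_ne_zero hfz₀ (zpow_ne_zero _ hz₀0)
  -- Step 6: integrate
  by_cases hm : m = -1
  · exfalso
    apply ha0
    apply loopB hz₀0 (φ := φ)
    intro t
    have hζA : circfn z₀ t ∈ A := by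
      rw [hmemA] at hz₀A ⊢
      unfold circfn
      simpa [norm_mul, Complex.norm_exp_ofReal_mul_I] using hz₀A
    have hζ0 : circfn z₀ t ≠ 0 := circfn_ne hz₀0 t
    have h1 := hφd _ hζA
    have h2 : f (circfn z₀ t) = a / circfn z₀ t := by
      rw [hfz _ hζA, hm]
      rw [zpow_neg_one]
      field_simp
    rwa [h2] at h1
  · left
    have hm1 : ((m : ℂ) + 1) ≠ 0 := by
      intro h
      apply hm
      have : (m : ℂ) = ((-1 : ℤ) : ℂ) := by push_cast; linear_combination h
      exact_mod_cast this
    have hint : ∀ (F : ℂ → ℂ) (c : ℂ), DifferentiableOn ℂ F A →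
        (∀ z ∈ A, HasDerivAt F (c * z ^ m) z) →
        ∀ z ∈ A, F z = c / ((m : ℂ) + 1) * z ^ (m + 1) +
          (F z₀ - c / ((m : ℂ) + 1) * z₀ ^ (m + 1)) := by
      intro F c hFdiff hFd
      have hhd : ∀ z ∈ A, HasDerivAt (fun z => F z - c / ((m : ℂ) + 1) * z ^ (m + 1)) 0 z := by
        intro z hz
        have hz0 : z ≠ 0 := hA0 z hz
        refine ((hFd z hz).sub
          ((hasDerivAt_zpow (m + 1) z (Or.inl hz0)).const_mul (c / ((m : ℂ) + 1)))).congr_deriv ?_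
        have h2 : m + 1 - 1 = m := by ring
        rw [h2]
        push_cast
        field_simp
        ring
      have hcst := const_of_deriv_zero hAopen hAconn
        (fun z hz => ((hhd z hz).differentiableAt).differentiableWithinAt)
        (fun z hz => (hhd z hz).deriv) hz₀A
      intro z hz
      have := hcst z hz
      linear_combination this
    have hφint := hint φ a hφ (fun z hz => by
      have h1 := hφd z hz
      rwa [hfz z hz] at h1)
    have hψint := hint ψ b hψ (fun z hz => by
      have h1 := hψd z hz
      rwa [hgz z hz] at h1)
    exact ⟨m + 1, a / ((m : ℂ) + 1), b / ((m : ℂ) + 1),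
      φ z₀ - a / ((m : ℂ) + 1) * z₀ ^ (m + 1), ψ z₀ - b / ((m : ℂ) + 1) * z₀ ^ (m + 1),
      fun z hz => ⟨hφint z hz, hψint z hz⟩⟩
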